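/- Let C ⊆ ℝⁿ be a nonempty closed convex set, let x₀ ∈ C, let σ > 0 and η₀ > 0, let f : ℝⁿ → ℝ be differentiable and convex, set f_σ(x) = f(x) + (σ/2)‖x − x₀‖², and let x*_σ be the minimizer of f_σ over C. Let (a_k)_{k≥0} and (η_k)_{k≥1} be positive with a₀ = 1, A_k = Σ_{i=0}^{k} a_i, θ_k = a_k/A_k, and θ_k ≤ √(σ/(2(η_k + σ))) for all k ≥ 1. Let ε_k^M ≥ 0 for k ≥ 0 and ε_k^ℓ ≥ 0 for k ≥ 1, with ε₀^ℓ = 0. Set z₀ = (η₀ + σ)x₀ − ∇f(x₀), and suppose y₀ = v₀ = ŷ₀ ∈ C satisfies M₀(y₀) ≤ inf_{u ∈ C} M₀(u) + ε₀^M, where M₀(u) = −⟨z₀, u⟩ + ((σ + η₀)/2)‖u‖², as well as f(y₀) ≤ f(x₀) + ⟨∇f(x₀), y₀ − x₀⟩ + (η₀/2)‖y₀ − x₀‖². For k ≥ 1, suppose the sequences satisfy: x_k = (1/(1+θ_k))y_{k−1} + (θ_k/(1+θ_k))v_{k−1}; z_k = z_{k−1} − a_k ∇f_σ(x_k) + σ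 a_k x_k; v_k ∈ C with M_k(v_k) ≤ inf_{u ∈ C} M_k(u) + ε_k^M, where M_k(u) = −⟨z_k, u⟩ + ((σ A_k + η₀)/2)‖u‖²; ŷ_k = (1 − θ_k)y_{k−1} + θ_k v_k; y_k ∈ C with ℓ_k(y_k) ≤ inf_{u ∈ C} ℓ_k(u) + ε_k^ℓ, where ℓ_k(u) = ⟨∇f_σ(ŷ_k), u − ŷ_k⟩ + ((η_k + σ)/2)‖u − ŷ_k‖²; and moreover f(ŷ_k) ≤ f(x_k) + ⟨∇f(x_k), ŷ_k − x_k⟩ + (η_k/2)‖ŷ_k − x_k‖² and f(y_k) ≤ f(ŷ_k) + ⟨∇f(ŷ_k), y_k − ŷ_k⟩ + (η_k/2)‖y_k − ŷ_k‖². Then for all k ≥ 1: (1/(η_k + σ))·‖G^σ_{η_k+σ}(ŷ_k)‖² ≤ (1/A_k)·( η₀‖x*_σ − x₀‖² + 2·Σ_{i=0}^{k} (2ε_i^M + A_i ε_i^ℓ) ), where G^σ_{η+σ}(ŷ) = (η + σ)(ŷ − P_C(ŷ − (1/(η+σ))∇f_σ(ŷ))) is the gradient mapping of f_σ on C. -/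

import Mathlib

open Set
open scoped RealInnerProductSpace BigOperators

variable {E : Type*} [NormedAddCommGroup E] [InnerProductSpace ℝ E]

theorem agd_norm_sq_decomp (x0 p q : E) :
    ‖q - x0‖ ^ 2 = ‖p - x0‖ ^ 2 + 2 * ⟪p - x0, q - p⟫ + ‖q - p‖ ^ 2 := by
  have h : q - x0 = (p - x0) + (q - p) := by abel
  rw [h, norm_add_sq_real]

theorem agd_quad_midpoint (z u v : E) (B : ℝ) :
    -⟪z, (1/2 : ℝ) • u + (1/2 : ℝ) • v⟫ + (B / 2) * ‖(1/2 : ℝ) • u + (1/2 : ℝ) • v‖ ^ 2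
      = ((-⟪z, u⟫ + (B / 2) * ‖u‖ ^ 2) + (-⟪z, v⟫ + (B / 2) * ‖v‖ ^ 2)) / 2
          - (B / 8) * ‖u - v‖ ^ 2 := by
  have h1 : ‖(1/2 : ℝ) • u + (1/2 : ℝ) • v‖ ^ 2 = (1/4) * ‖u + v‖ ^ 2 := by
    rw [← smul_add, norm_smul]
    simp [Real.norm_eq_abs]
    ring
  have h2 : ‖u + v‖ ^ 2 = 2 * ‖u‖ ^ 2 + 2 * ‖v‖ ^ 2 - ‖u - v‖ ^ 2 := by
    have := norm_add_sq_real u v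
    have := norm_sub_sq_real u v
    linarith
  rw [inner_add_right, real_inner_smul_right, real_inner_smul_right, h1, h2]
  ring

theorem agd_jensen {θ : ℝ} (h0 : 0 ≤ θ) (h1 : θ ≤ 1) (w d : E) :
    ‖θ • w + (1 - θ) • d‖ ^ 2 ≤ θ * ‖w‖ ^ 2 + (1 - θ) * ‖d‖ ^ 2 := by
  have hid : ‖θ • w + (1 - θ) • d‖ ^ 2
      = θ * ‖w‖ ^ 2 + (1 - θ) * ‖d‖ ^ 2 - θ * (1 - θ) * ‖w - d‖ ^ 2 := by
    rw [norm_add_sq_real, norm_sub_sq_real, norm_smul, norm_smul,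
      real_inner_smul_left, real_inner_smul_right, Real.norm_eq_abs, Real.norm_eq_abs,
      abs_of_nonneg h0, abs_of_nonneg (by linarith : (0:ℝ) ≤ 1 - θ)]
    ring
  nlinarith [mul_nonneg (mul_nonneg h0 (by linarith : (0:ℝ) ≤ 1 - θ)) (sq_nonneg ‖w - d‖)]

theorem agd_quad_diff (G X : E) (c : ℝ) (u w : E) :
    (⟪G, u - X⟫ + c / 2 * ‖u - X‖ ^ 2) - (⟪G, w - X⟫ + c / 2 * ‖w - X‖ ^ 2)
      = (-⟪c • X - G, u⟫ + c / 2 * ‖u‖ ^ 2) - (-⟪c • X - G, w⟫ + c / 2 * ‖w‖ ^ 2) := by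
  rw [norm_sub_sq_real u X, norm_sub_sq_real w X, inner_sub_right, inner_sub_right,
    inner_sub_left, inner_sub_left, real_inner_smul_left, real_inner_smul_left,
    real_inner_comm X u, real_inner_comm X w]
  ring

theorem agd_proj_inner_le {C : Set E} (hc : Convex ℝ C)
    {proj : E → E} (hmem : ∀ u, proj u ∈ C) (hmin : ∀ u, ∀ w ∈ C, ‖u - proj u‖ ≤ ‖u - w‖)
    (u : E) : ∀ w ∈ C, ⟪u - proj u, w - proj u⟫ ≤ 0 := by
  haveI : Nonempty (↥C) := ⟨⟨proj u, hmem u⟩⟩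
  have h : ‖u - proj u‖ = ⨅ w : C, ‖u - (w : E)‖ := by
    refine le_antisymm (le_ciInf fun w => hmin u w w.2) ?_
    have hbdd : BddBelow (Set.range fun w : C => ‖u - (w : E)‖) := by
      refine ⟨0, ?_⟩
      rintro x ⟨w, rfl⟩
      exact norm_nonneg _
    exact ciInf_le hbdd ⟨proj u, hmem u⟩
  exact (norm_eq_iInf_iff_real_inner_le_zero hc (hmem u)).mp h

theorem agd_grad_convex_lower [CompleteSpace E] {f : E → ℝ} {f' : E → E}
    (hgrad : ∀ x, HasGradientAt f (f' x) x) (hconv : ConvexOn ℝ Set.univ f)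
    (p q : E) : f p + ⟪f' p, q - p⟫ ≤ f q := by
  set φ : ℝ → ℝ := fun t => f (p + t • (q - p)) with hφ
  have hline : HasDerivAt φ ⟪f' p, q - p⟫ 0 := by
    have h1 : HasDerivAt (fun t : ℝ => p + t • (q - p)) (q - p) 0 := by
      simpa using ((hasDerivAt_id (0:ℝ)).smul_const (q - p)).const_add p
    have h2 := (hgrad (p + (0:ℝ) • (q - p))).hasFDerivAt
    have h3 := h2.comp_hasDerivAt (0:ℝ) h1
    simp only [zero_smul, add_zero] at h3 ⊢
    simpa [hφ, InnerProductSpace.toDual_apply_apply, Function.comp_def] using h3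
  have hT : Filter.Tendsto (slope φ 0) (nhdsWithin 0 (Set.Ioi (0:ℝ)))
      (nhds ⟪f' p, q - p⟫) :=
    (hasDerivAt_iff_tendsto_slope.mp hline).mono_left
      (nhdsWithin_mono 0 (fun x hx => ne_of_gt hx))
  have hb : ∀ᶠ t in nhdsWithin 0 (Set.Ioi (0:ℝ)), slope φ 0 t ≤ f q - f p := by
    filter_upwards [Ioc_mem_nhdsGT_of_mem (Set.mem_Ico.mpr ⟨le_refl (0:ℝ), zero_lt_one⟩)]
      with t ht
    have hcv := hconv.2 (Set.mem_univ q) (Set.mem_univ p) (le_of_lt ht.1)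
      (by linarith [ht.2] : (0:ℝ) ≤ 1 - t) (by ring)
    have hpt : t • q + (1 - t) • p = p + t • (q - p) := by module
    rw [hpt] at hcv
    have hslope : slope φ 0 t = (φ t - φ 0) / t := by
      rw [slope_def_field]; simp
    rw [hslope]
    have hφ0 : φ 0 = f p := by simp [hφ]
    rw [div_le_iff₀ ht.1, hφ0]
    have : φ t ≤ t * f q + (1 - t) * f p := hcv
    nlinarith
  have := le_of_tendsto hT hb
  linarith


set_option maxHeartbeats 2000000 in
/-- **Lemma: inexact accelerated iteration, AGD-Iter.** For the inexact
accelerated gradient sequences on a nonempty closed convex set `C` applied to the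
regularized objective `f_σ(u) = f(u) + (σ/2)‖u - x₀‖²`, with inexact minimizers of the
auxiliary functions `M_k` and `ℓ_k` (errors `εM k`, `εl k`), descent conditions with
estimates `η k`, and weights satisfying `θ_k = a_k/A_k ≤ √(σ/(2(η_k+σ)))`, the gradient
mapping of `f_σ` at `ŷ_k` satisfies
`(1/(η_k+σ))‖G^σ_{η_k+σ}(ŷ_k)‖² ≤ (1/A_k)(η₀‖x*_σ - x₀‖² + 2 Σ_{i≤k} (2εM_i + A_i εl_i))`. -/
theorem inexact_agd_gradient_mapping_bound
    {n : ℕ} (C : Set (EuclideanSpace ℝ (Fin n)))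
    (hCne : C.Nonempty) (hCclosed : IsClosed C) (hCconvex : Convex ℝ C)
    (proj : EuclideanSpace ℝ (Fin n) → EuclideanSpace ℝ (Fin n))
    (hproj_mem : ∀ u, proj u ∈ C)
    (hproj_min : ∀ u, ∀ w ∈ C, ‖u - proj u‖ ≤ ‖u - w‖)
    (f : EuclideanSpace ℝ (Fin n) → ℝ) (f' : EuclideanSpace ℝ (Fin n) → EuclideanSpace ℝ (Fin n))
    (hgrad : ∀ x, HasGradientAt f (f' x) x)
    (hconv : ConvexOn ℝ Set.univ f)
    (x0 : EuclideanSpace ℝ (Fin n)) (hx0 : x0 ∈ C)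
    (σ η0 : ℝ) (hσ : 0 < σ) (hη0 : 0 < η0)
    (xsσ : EuclideanSpace ℝ (Fin n)) (hxsσC : xsσ ∈ C)
    (hxsσmin : ∀ u ∈ C,
      f xsσ + (σ / 2) * ‖xsσ - x0‖ ^ 2 ≤ f u + (σ / 2) * ‖u - x0‖ ^ 2)
    (a η A εM εl : ℕ → ℝ)
    (ha_pos : ∀ k, 0 < a k) (ha0 : a 0 = 1)
    (hη_pos : ∀ k, 1 ≤ k → 0 < η k)
    (hA : ∀ k, A k = ∑ i ∈ Finset.range (k + 1), a i)
    (hθ : ∀ k, 1 ≤ k → a k / A k ≤ Real.sqrt (σ / (2 * (η k + σ))))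
    (hεM : ∀ k, 0 ≤ εM k) (hεl : ∀ k, 1 ≤ k → 0 ≤ εl k) (hεl0 : εl 0 = 0)
    (z v y yh xx : ℕ → EuclideanSpace ℝ (Fin n))
    (hz0 : z 0 = (η0 + σ) • x0 - f' x0)
    (hy0C : y 0 ∈ C) (hv0 : v 0 = y 0) (hyh0 : yh 0 = y 0)
    (hy0M : ∀ u ∈ C,
      -⟪z 0, y 0⟫ + ((σ + η0) / 2) * ‖y 0‖ ^ 2 ≤
        (-⟪z 0, u⟫ + ((σ + η0) / 2) * ‖u‖ ^ 2) + εM 0)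
    (hy0descent : f (y 0) ≤ f x0 + ⟪f' x0, y 0 - x0⟫ + (η0 / 2) * ‖y 0 - x0‖ ^ 2)
    (hxx : ∀ k, 1 ≤ k → xx k =
      (1 / (1 + a k / A k)) • y (k - 1) + ((a k / A k) / (1 + a k / A k)) • v (k - 1))
    (hz : ∀ k, 1 ≤ k → z k =
      z (k - 1) - a k • (f' (xx k) + σ • (xx k - x0)) + (σ * a k) • xx k)
    (hvC : ∀ k, 1 ≤ k → v k ∈ C)
    (hvM : ∀ k, 1 ≤ k → ∀ u ∈ C,
      -⟪z k, v k⟫ + ((σ * A k + η0) / 2) * ‖v k‖ ^ 2 ≤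
        (-⟪z k, u⟫ + ((σ * A k + η0) / 2) * ‖u‖ ^ 2) + εM k)
    (hyh : ∀ k, 1 ≤ k → yh k = (1 - a k / A k) • y (k - 1) + (a k / A k) • v k)
    (hyC : ∀ k, 1 ≤ k → y k ∈ C)
    (hyl : ∀ k, 1 ≤ k → ∀ u ∈ C,
      ⟪f' (yh k) + σ • (yh k - x0), y k - yh k⟫ + ((η k + σ) / 2) * ‖y k - yh k‖ ^ 2 ≤
        (⟪f' (yh k) + σ • (yh k - x0), u - yh k⟫ + ((η k + σ) / 2) * ‖u - yh k‖ ^ 2) + εl k)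
    (hdescent1 : ∀ k, 1 ≤ k →
      f (yh k) ≤ f (xx k) + ⟪f' (xx k), yh k - xx k⟫ + (η k / 2) * ‖yh k - xx k‖ ^ 2)
    (hdescent2 : ∀ k, 1 ≤ k →
      f (y k) ≤ f (yh k) + ⟪f' (yh k), y k - yh k⟫ + (η k / 2) * ‖y k - yh k‖ ^ 2) :
    ∀ k, 1 ≤ k →
      (1 / (η k + σ)) *
          ‖(η k + σ) •
            (yh k - proj (yh k - (1 / (η k + σ)) • (f' (yh k) + σ • (yh k - x0))))‖ ^ 2 ≤
        (1 / A k) *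
          (η0 * ‖xsσ - x0‖ ^ 2 +
            2 * ∑ i ∈ Finset.range (k + 1), (2 * εM i + A i * εl i)) := by

  classical
  have hgconv : ∀ p q : EuclideanSpace ℝ (Fin n), f p + ⟪f' p, q - p⟫ ≤ f q :=
    fun p q => agd_grad_convex_lower hgrad hconv p q
  have hA0 : A 0 = 1 := by rw [hA]; simpa using ha0
  have hAsucc : ∀ k, A (k + 1) = A k + a (k + 1) := by
    intro k; rw [hA, hA, Finset.sum_range_succ]
  have hApos : ∀ k, 0 < A k := by
    intro k; rw [hA]
    exact Finset.sum_pos (fun i _ => ha_pos i)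
      (Finset.nonempty_range_iff.mpr (Nat.succ_ne_zero k))
  obtain ⟨Fs, hFsdef⟩ : ∃ F : EuclideanSpace ℝ (Fin n) → ℝ,
      F = fun u => f u + σ / 2 * ‖u - x0‖ ^ 2 := ⟨_, rfl⟩
  obtain ⟨gr, hgrdef⟩ : ∃ G : EuclideanSpace ℝ (Fin n) → EuclideanSpace ℝ (Fin n),
      G = fun u => f' u + σ • (u - x0) := ⟨_, rfl⟩
  obtain ⟨xt, hxtdef⟩ : ∃ X : ℕ → EuclideanSpace ℝ (Fin n),
      X = fun i => if i = 0 then x0 else xx i := ⟨_, rfl⟩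
  obtain ⟨Phi, hPhidef⟩ : ∃ Ph : ℕ → EuclideanSpace ℝ (Fin n) → ℝ,
      Ph = fun k u =>
        (∑ i ∈ Finset.range (k + 1),
          a i * (Fs (xt i) + ⟪gr (xt i), u - xt i⟫ + σ / 2 * ‖u - xt i‖ ^ 2))
          + η0 / 2 * ‖u - x0‖ ^ 2 := ⟨_, rfl⟩
  obtain ⟨Mq, hMqdef⟩ : ∃ M : ℕ → EuclideanSpace ℝ (Fin n) → ℝ,
      M = fun k u => -⟪z k, u⟫ + (σ * A k + η0) / 2 * ‖u‖ ^ 2 := ⟨_, rfl⟩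
  obtain ⟨Er, hErdef⟩ : ∃ Ee : ℕ → ℝ,
      Ee = fun k => ∑ i ∈ Finset.range k, (2 * εM i + A (i + 1) * εl (i + 1)) := ⟨_, rfl⟩
  have hxt0 : xt 0 = x0 := by simp [hxtdef]
  have hxtS : ∀ i : ℕ, xt (i + 1) = xx (i + 1) := by
    intro i; simp only [hxtdef]; rw [if_neg (Nat.succ_ne_zero i)]
  have hgx0 : gr x0 = f' x0 := by simp [hgrdef]
  have hvC' : ∀ k, v k ∈ C := by
    intro k; cases k with
    | zero => rw [hv0]; exact hy0C
    | succ k => exact hvC (k + 1) (by omega)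
  have hyC' : ∀ k, y k ∈ C := by
    intro k; cases k with
    | zero => exact hy0C
    | succ k => exact hyC (k + 1) (by omega)
  have hθfacts : ∀ k, 0 < a (k + 1) / A (k + 1) ∧ a (k + 1) / A (k + 1) < 1 := by
    intro k
    refine ⟨div_pos (ha_pos _) (hApos _), ?_⟩
    rw [div_lt_one (hApos _), hAsucc k]
    linarith [hApos k, ha_pos (k + 1)]
  have hyhC : ∀ k, yh (k + 1) ∈ C := by
    intro k
    have h := hyh (k + 1) (by omega)
    simp only [Nat.add_sub_cancel] at h
    rw [h]
    obtain ⟨h1, h2⟩ := hθfacts k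
    exact hCconvex (hyC' k) (hvC' (k + 1)) (by linarith) (le_of_lt h1) (by ring)
  have hFs_sc : ∀ p q : EuclideanSpace ℝ (Fin n),
      Fs p + ⟪gr p, q - p⟫ + σ / 2 * ‖q - p‖ ^ 2 ≤ Fs q := by
    intro p q
    have h2 := agd_norm_sq_decomp x0 p q
    have h3 : ⟪gr p, q - p⟫ = ⟪f' p, q - p⟫ + σ * ⟪p - x0, q - p⟫ := by
      simp only [hgrdef]
      rw [inner_add_left, real_inner_smul_left]
    simp only [hFsdef]
    rw [h3, h2]
    linarith [hgconv p q]
  have hFs_desc : ∀ (p q : EuclideanSpace ℝ (Fin n)) (c : ℝ),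
      f q ≤ f p + ⟪f' p, q - p⟫ + c / 2 * ‖q - p‖ ^ 2 →
      Fs q ≤ Fs p + ⟪gr p, q - p⟫ + (c + σ) / 2 * ‖q - p‖ ^ 2 := by
    intro p q c hd
    have h2 := agd_norm_sq_decomp x0 p q
    have h3 : ⟪gr p, q - p⟫ = ⟪f' p, q - p⟫ + σ * ⟪p - x0, q - p⟫ := by
      simp only [hgrdef]
      rw [inner_add_left, real_inner_smul_left]
    simp only [hFsdef]
    rw [h3, h2]
    linarith [hd]
  have hMmin : ∀ k, ∀ u ∈ C, Mq k (v k) ≤ Mq k u + εM k := by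
    intro k
    cases k with
    | zero =>
      intro u hu
      simp only [hMqdef, hv0, hA0]
      linarith [hy0M u hu]
    | succ k =>
      intro u hu
      simp only [hMqdef]
      linarith [hvM (k + 1) (by omega) u hu]
  have hP1 : ∀ k, ∀ u ∈ C,
      Mq k (v k) + (σ * A k + η0) / 4 * ‖u - v k‖ ^ 2 ≤ Mq k u + 2 * εM k := by
    intro k u hu
    have hm : (1 / 2 : ℝ) • u + (1 / 2 : ℝ) • v k ∈ C :=
      hCconvex hu (hvC' k) (by norm_num) (by norm_num) (by norm_num)
    have h1 := hMmin k _ hm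
    have h2 := agd_quad_midpoint (z k) u (v k) (σ * A k + η0)
    simp only [hMqdef] at h1 ⊢
    linarith [h1, h2]
  have hPhisplit : ∀ k (uu : EuclideanSpace ℝ (Fin n)),
      Phi (k + 1) uu = Phi k uu
        + a (k + 1) * (Fs (xx (k + 1)) + ⟪gr (xx (k + 1)), uu - xx (k + 1)⟫
            + σ / 2 * ‖uu - xx (k + 1)‖ ^ 2) := by
    intro k uu
    simp only [hPhidef]
    rw [Finset.sum_range_succ, hxtS k]
    ring
  have hPhiM : ∀ k (u w : EuclideanSpace ℝ (Fin n)),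
      Phi k u - Phi k w = Mq k u - Mq k w := by
    intro k
    induction k with
    | zero =>
      intro u w
      have hq := agd_quad_diff (f' x0) x0 (σ + η0) u w
      have hzu : ∀ uu : EuclideanSpace ℝ (Fin n),
          ⟪z 0, uu⟫ = (σ + η0) * ⟪x0, uu⟫ - ⟪f' x0, uu⟫ := by
        intro uu
        rw [hz0, inner_sub_left, real_inner_smul_left]
        ring
      have hq2 : ∀ uu : EuclideanSpace ℝ (Fin n),
          ⟪((σ + η0) • x0 - f' x0 : EuclideanSpace ℝ (Fin n)), uu⟫
            = (σ + η0) * ⟪x0, uu⟫ - ⟪f' x0, uu⟫ := by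
        intro uu
        rw [inner_sub_left, real_inner_smul_left]
      simp only [hPhidef, hMqdef, Nat.zero_add, Finset.sum_range_one, hxt0, hgx0, ha0, hA0]
      rw [hzu u, hzu w]
      linarith [hq, hq2 u, hq2 w]
    | succ k ih =>
      intro u w
      have hq := agd_quad_diff (gr (xx (k + 1))) (xx (k + 1)) σ u w
      have hz' := hz (k + 1) (by omega)
      simp only [Nat.add_sub_cancel] at hz'
      have e1 : ∀ uu : EuclideanSpace ℝ (Fin n),
          ⟪z (k + 1), uu⟫ = ⟪z k, uu⟫ + a (k + 1) * ⟪σ • xx (k + 1) - gr (xx (k + 1)), uu⟫ := by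
        intro uu
        rw [hz']
        simp only [hgrdef, inner_add_left, inner_sub_left, real_inner_smul_left]
        ring
      have hMsplit : ∀ uu : EuclideanSpace ℝ (Fin n),
          Mq (k + 1) uu = Mq k uu - a (k + 1) * ⟪σ • xx (k + 1) - gr (xx (k + 1)), uu⟫
            + σ * a (k + 1) / 2 * ‖uu‖ ^ 2 := by
        intro uu
        simp only [hMqdef]
        rw [e1 uu, hAsucc k]
        ring
      rw [hPhisplit k u, hPhisplit k w, hMsplit u, hMsplit w]
      linear_combination ih u w + a (k + 1) * hq
  have hHAT : ∀ k, A k * Fs (y k) ≤ Phi k (v k) + Er k →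
      (A k + a (k + 1)) * Fs (yh (k + 1)) ≤ Phi (k + 1) (v (k + 1)) + Er k + 2 * εM k := by
    intro k hinv
    have hxxK := hxx (k + 1) (by omega)
    have hyhK := hyh (k + 1) (by omega)
    simp only [Nat.add_sub_cancel] at hxxK hyhK
    have hs := hθ (k + 1) (by omega)
    rw [hAsucc k] at hxxK hyhK hs
    obtain ⟨θ, hθdef⟩ : ∃ t : ℝ, t = a (k + 1) / (A k + a (k + 1)) := ⟨_, rfl⟩
    rw [← hθdef] at hxxK hyhK hs
    have hApk := hApos k
    have hapK := ha_pos (k + 1)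
    have hBspos : (0:ℝ) < A k + a (k + 1) := by linarith
    have hBsne : (A k + a (k + 1)) ≠ 0 := ne_of_gt hBspos
    have hθpos : 0 < θ := by rw [hθdef]; exact div_pos hapK hBspos
    have hθlt1 : θ < 1 := by rw [hθdef, div_lt_one hBspos]; linarith
    have h1θne : (1:ℝ) + θ ≠ 0 := by intro hcon; linarith
    have hηK := hη_pos (k + 1) (by omega)
    have hθsq : θ ^ 2 * (η (k + 1) + σ) ≤ σ / 2 := by
      have hnn : (0:ℝ) ≤ σ / (2 * (η (k + 1) + σ)) := by positivity
      have h5 : θ * θ ≤ Real.sqrt (σ / (2 * (η (k + 1) + σ)))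
          * Real.sqrt (σ / (2 * (η (k + 1) + σ))) :=
        mul_le_mul hs hs hθpos.le (Real.sqrt_nonneg _)
      rw [Real.mul_self_sqrt hnn] at h5
      have h6 : θ ^ 2 ≤ σ / (2 * (η (k + 1) + σ)) := by rw [pow_two]; exact h5
      rw [le_div_iff₀ (by linarith : (0:ℝ) < 2 * (η (k + 1) + σ))] at h6
      nlinarith [h6]
    have c1 : (A k + a (k + 1)) * (1 - θ) = A k := by
      rw [hθdef]; field_simp; ring
    have c2 : (A k + a (k + 1)) * θ = a (k + 1) := by
      rw [hθdef]; field_simp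
    have hyhK' : (A k + a (k + 1)) • yh (k + 1) = (A k) • y k + (a (k + 1)) • v (k + 1) := by
      rw [hyhK, smul_add, smul_smul, smul_smul, c1, c2]
    have hvecy : (A k) • (y k - xx (k + 1)) + (a (k + 1)) • (v (k + 1) - xx (k + 1))
        = (A k + a (k + 1)) • (yh (k + 1) - xx (k + 1)) := by
      rw [smul_sub, smul_sub, smul_sub, hyhK']
      module
    have hid : yh (k + 1) - xx (k + 1)
        = (θ ^ 2) • (v (k + 1) - xx (k + 1)) + (θ * (1 - θ)) • (v (k + 1) - v k) := by
      rw [hyhK, hxxK]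
      match_scalars
      · field_simp
        ring
      · field_simp
        ring
      · field_simp
        ring
    have hfold : (θ ^ 2) • (v (k + 1) - xx (k + 1)) + (θ * (1 - θ)) • (v (k + 1) - v k)
        = θ • (θ • (v (k + 1) - xx (k + 1)) + (1 - θ) • (v (k + 1) - v k)) := by
      module
    have hn3 : ‖yh (k + 1) - xx (k + 1)‖ ^ 2
        ≤ θ ^ 2 * (θ * ‖v (k + 1) - xx (k + 1)‖ ^ 2 + (1 - θ) * ‖v (k + 1) - v k‖ ^ 2) := by
      rw [hid, hfold, norm_smul, Real.norm_eq_abs, abs_of_nonneg hθpos.le, mul_pow]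
      exact mul_le_mul_of_nonneg_left (agd_jensen hθpos.le hθlt1.le _ _) (sq_nonneg θ)
    have h01 : (0:ℝ) ≤ ‖v (k + 1) - xx (k + 1)‖ ^ 2 := sq_nonneg _
    have h02 : (0:ℝ) ≤ ‖v (k + 1) - v k‖ ^ 2 := sq_nonneg _
    have ht0 : (0:ℝ) ≤ θ * ‖v (k + 1) - xx (k + 1)‖ ^ 2 + (1 - θ) * ‖v (k + 1) - v k‖ ^ 2 := by
      have e1 := mul_nonneg hθpos.le h01
      have e2 := mul_nonneg (by linarith : (0:ℝ) ≤ 1 - θ) h02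
      linarith
    have hK3 : (A k + a (k + 1)) * ((η (k + 1) + σ) / 2) * ‖yh (k + 1) - xx (k + 1)‖ ^ 2
        ≤ σ * a (k + 1) / 2 * ‖v (k + 1) - xx (k + 1)‖ ^ 2
          + (σ * A k + η0) / 4 * ‖v (k + 1) - v k‖ ^ 2 := by
      have s1 : (A k + a (k + 1)) * ((η (k + 1) + σ) / 2) * ‖yh (k + 1) - xx (k + 1)‖ ^ 2
          ≤ (A k + a (k + 1)) * ((η (k + 1) + σ) / 2)
            * (θ ^ 2 * (θ * ‖v (k + 1) - xx (k + 1)‖ ^ 2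
                + (1 - θ) * ‖v (k + 1) - v k‖ ^ 2)) :=
        mul_le_mul_of_nonneg_left hn3
          (mul_nonneg hBspos.le (by linarith : (0:ℝ) ≤ (η (k + 1) + σ) / 2))
      have s2 : (A k + a (k + 1)) * ((η (k + 1) + σ) / 2)
            * (θ ^ 2 * (θ * ‖v (k + 1) - xx (k + 1)‖ ^ 2 + (1 - θ) * ‖v (k + 1) - v k‖ ^ 2))
          = ((A k + a (k + 1)) * (θ * ‖v (k + 1) - xx (k + 1)‖ ^ 2
              + (1 - θ) * ‖v (k + 1) - v k‖ ^ 2) / 2) * (θ ^ 2 * (η (k + 1) + σ)) := by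
        ring
      have s3 : ((A k + a (k + 1)) * (θ * ‖v (k + 1) - xx (k + 1)‖ ^ 2
              + (1 - θ) * ‖v (k + 1) - v k‖ ^ 2) / 2) * (θ ^ 2 * (η (k + 1) + σ))
          ≤ ((A k + a (k + 1)) * (θ * ‖v (k + 1) - xx (k + 1)‖ ^ 2
              + (1 - θ) * ‖v (k + 1) - v k‖ ^ 2) / 2) * (σ / 2) :=
        mul_le_mul_of_nonneg_left hθsq
          (by nlinarith [mul_nonneg hBspos.le ht0])
      have s4 : ((A k + a (k + 1)) * (θ * ‖v (k + 1) - xx (k + 1)‖ ^ 2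
              + (1 - θ) * ‖v (k + 1) - v k‖ ^ 2) / 2) * (σ / 2)
          = σ / 4 * (((A k + a (k + 1)) * θ) * ‖v (k + 1) - xx (k + 1)‖ ^ 2)
            + σ / 4 * (((A k + a (k + 1)) * (1 - θ)) * ‖v (k + 1) - v k‖ ^ 2) := by
        ring
      rw [c1, c2] at s4
      have e1 : (0:ℝ) ≤ σ * a (k + 1) * ‖v (k + 1) - xx (k + 1)‖ ^ 2 :=
        mul_nonneg (mul_nonneg hσ.le hapK.le) h01
      have e2 : (0:ℝ) ≤ η0 * ‖v (k + 1) - v k‖ ^ 2 := mul_nonneg hη0.le h02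
      linarith [s1, s2, s3, s4, e1, e2]
    have hdesc := hFs_desc (xx (k + 1)) (yh (k + 1)) (η (k + 1)) (hdescent1 (k + 1) (by omega))
    have hdescS := mul_le_mul_of_nonneg_left hdesc hBspos.le
    have hconvX : Fs (xx (k + 1)) + ⟪gr (xx (k + 1)), y k - xx (k + 1)⟫ ≤ Fs (y k) := by
      have h := hFs_sc (xx (k + 1)) (y k)
      have hnn : (0:ℝ) ≤ σ / 2 * ‖y k - xx (k + 1)‖ ^ 2 :=
        mul_nonneg (by linarith) (sq_nonneg _)
      linarith
    have hconvS := mul_le_mul_of_nonneg_left hconvX hApk.le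
    have hinner : (A k) * ⟪gr (xx (k + 1)), y k - xx (k + 1)⟫
        + (a (k + 1)) * ⟪gr (xx (k + 1)), v (k + 1) - xx (k + 1)⟫
        = (A k + a (k + 1)) * ⟪gr (xx (k + 1)), yh (k + 1) - xx (k + 1)⟫ := by
      rw [← real_inner_smul_right, ← real_inner_smul_right, ← real_inner_smul_right,
        ← inner_add_right, hvecy]
    have hP1k := hP1 k (v (k + 1)) (hvC' (k + 1))
    have hMP := hPhiM k (v (k + 1)) (v k)
    have hsplitv := hPhisplit k (v (k + 1))
    linarith [hdescS, hK3, hinner, hconvS, hinv, hP1k, hMP, hsplitv]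
  have hINV : ∀ k, A k * Fs (y k) ≤ Phi k (v k) + Er k := by
    intro k
    induction k with
    | zero =>
      have hb := hFs_desc x0 (y 0) η0 hy0descent
      simp only [hPhidef, hErdef, Finset.range_zero, Finset.sum_empty, Nat.zero_add,
        Finset.sum_range_one, hxt0, hv0, hA0, ha0]
      linarith [hb]
    | succ k ih =>
      have hat := hHAT k ih
      rw [← hAsucc k] at hat
      have hfy : Fs (y (k + 1)) ≤ Fs (yh (k + 1)) + εl (k + 1) := by
        have hd := hFs_desc (yh (k + 1)) (y (k + 1)) (η (k + 1)) (hdescent2 (k + 1) (by omega))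
        have hl := hyl (k + 1) (by omega) (yh (k + 1)) (hyhC k)
        simp only [sub_self, inner_zero_right, norm_zero] at hl
        have e : ⟪gr (yh (k + 1)), y (k + 1) - yh (k + 1)⟫
            = ⟪f' (yh (k + 1)) + σ • (yh (k + 1) - x0), y (k + 1) - yh (k + 1)⟫ := by
          simp only [hgrdef]
        linarith [hd, hl, e]
      have hfyS := mul_le_mul_of_nonneg_left hfy (hApos (k + 1)).le
      have hErs : Er (k + 1) = Er k + (2 * εM k + A (k + 1) * εl (k + 1)) := by
        simp only [hErdef]; rw [Finset.sum_range_succ]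
      linarith [hat, hfyS, hErs]
  have hErT : ∀ m, Er m + 2 * εM m + A 0 * εl 0
      = ∑ i ∈ Finset.range (m + 1), (2 * εM i + A i * εl i) := by
    intro m
    induction m with
    | zero =>
      simp only [hErdef, Finset.range_zero, Finset.sum_empty, Nat.zero_add,
        Finset.sum_range_one]
      ring
    | succ m ih =>
      have h1 : Er (m + 1) = Er m + (2 * εM m + A (m + 1) * εl (m + 1)) := by
        simp only [hErdef]; rw [Finset.sum_range_succ]
      have h2 : ∑ i ∈ Finset.range (m + 1 + 1), (2 * εM i + A i * εl i)
          = ∑ i ∈ Finset.range (m + 1), (2 * εM i + A i * εl i)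
            + (2 * εM (m + 1) + A (m + 1) * εl (m + 1)) := Finset.sum_range_succ _ _
      linarith [ih, h1, h2]
  intro k hk
  obtain ⟨m, rfl⟩ : ∃ m, k = m + 1 := ⟨k - 1, by omega⟩
  have hηρ : 0 < η (m + 1) + σ := by linarith [hη_pos (m + 1) (by omega)]
  obtain ⟨gK, hgK⟩ : ∃ g : EuclideanSpace ℝ (Fin n),
      g = f' (yh (m + 1)) + σ • (yh (m + 1) - x0) := ⟨_, rfl⟩
  rw [← hgK]
  obtain ⟨P, hPdef⟩ : ∃ p : EuclideanSpace ℝ (Fin n),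
      p = proj (yh (m + 1) - (1 / (η (m + 1) + σ)) • gK) := ⟨_, rfl⟩
  rw [← hPdef]
  have hPC : P ∈ C := by rw [hPdef]; exact hproj_mem _
  have hproj2 := agd_proj_inner_le hCconvex hproj_mem hproj_min
      (yh (m + 1) - (1 / (η (m + 1) + σ)) • gK) (yh (m + 1)) (hyhC m)
  rw [← hPdef] at hproj2
  have hexp : ⟪(yh (m + 1) - (1 / (η (m + 1) + σ)) • gK) - P, yh (m + 1) - P⟫
      = ‖yh (m + 1) - P‖ ^ 2 - (1 / (η (m + 1) + σ)) * ⟪gK, yh (m + 1) - P⟫ := by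
    have hre : (yh (m + 1) - (1 / (η (m + 1) + σ)) • gK) - P
        = (yh (m + 1) - P) - (1 / (η (m + 1) + σ)) • gK := by module
    rw [hre, inner_sub_left, real_inner_smul_left, real_inner_self_eq_norm_sq]
  have hq1 : ‖yh (m + 1) - P‖ ^ 2 ≤ (1 / (η (m + 1) + σ)) * ⟪gK, yh (m + 1) - P⟫ := by
    linarith [hproj2, hexp]
  have hq1' : (η (m + 1) + σ) * ‖yh (m + 1) - P‖ ^ 2 ≤ ⟪gK, yh (m + 1) - P⟫ := by
    have h2 := mul_le_mul_of_nonneg_left hq1 hηρ.le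
    have e : (η (m + 1) + σ) * ((1 / (η (m + 1) + σ)) * ⟪gK, yh (m + 1) - P⟫)
        = ⟪gK, yh (m + 1) - P⟫ := by field_simp
    linarith [h2, e]
  have hlp : ⟪gK, P - yh (m + 1)⟫ + (η (m + 1) + σ) / 2 * ‖P - yh (m + 1)‖ ^ 2
      ≤ -((η (m + 1) + σ) / 2) * ‖yh (m + 1) - P‖ ^ 2 := by
    have h3 : ⟪gK, P - yh (m + 1)⟫ = -⟪gK, yh (m + 1) - P⟫ := by
      rw [show P - yh (m + 1) = -(yh (m + 1) - P) from (neg_sub (yh (m + 1)) P).symm,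
        inner_neg_right]
    have h4 : ‖P - yh (m + 1)‖ = ‖yh (m + 1) - P‖ := norm_sub_rev _ _
    rw [h3, h4]
    linarith [hq1']
  have hdescK := hFs_desc (yh (m + 1)) (y (m + 1)) (η (m + 1)) (hdescent2 (m + 1) (by omega))
  have hgrh : gr (yh (m + 1)) = gK := by rw [hgK]; simp only [hgrdef]
  rw [hgrh] at hdescK
  have hylK := hyl (m + 1) (by omega) P hPC
  rw [← hgK] at hylK
  have hFsxs : Fs xsσ ≤ Fs (y (m + 1)) := by
    simp only [hFsdef]
    linarith [hxsσmin (y (m + 1)) (hyC' (m + 1))]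
  have hq2 : (η (m + 1) + σ) * ‖yh (m + 1) - P‖ ^ 2
      ≤ 2 * (Fs (yh (m + 1)) - Fs xsσ + εl (m + 1)) := by
    linarith [hdescK, hylK, hlp, hFsxs]
  have hq3 := mul_le_mul_of_nonneg_left hq2 (hApos (m + 1)).le
  have hatm := hHAT m (hINV m)
  rw [← hAsucc m] at hatm
  have hMxs := hMmin (m + 1) xsσ hxsσC
  have hMPf := hPhiM (m + 1) xsσ (v (m + 1))
  have hPhiub : Phi (m + 1) xsσ ≤ A (m + 1) * Fs xsσ + η0 / 2 * ‖xsσ - x0‖ ^ 2 := by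
    simp only [hPhidef]
    have hsum : ∀ i ∈ Finset.range (m + 1 + 1),
        a i * (Fs (xt i) + ⟪gr (xt i), xsσ - xt i⟫ + σ / 2 * ‖xsσ - xt i‖ ^ 2)
          ≤ a i * Fs xsσ := by
      intro i _
      have h := hFs_sc (xt i) xsσ
      exact mul_le_mul_of_nonneg_left (by linarith) (ha_pos i).le
    have h2 := Finset.sum_le_sum hsum
    have h3 : ∑ i ∈ Finset.range (m + 1 + 1), a i * Fs xsσ = A (m + 1) * Fs xsσ := by
      rw [← Finset.sum_mul, ← hA]
    linarith [h2, h3]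
  have herr := hErT m
  have hA0e : A 0 * εl 0 = 0 := by rw [hεl0, mul_zero]
  have hTs : ∑ i ∈ Finset.range (m + 1 + 1), (2 * εM i + A i * εl i)
      = ∑ i ∈ Finset.range (m + 1), (2 * εM i + A i * εl i)
        + (2 * εM (m + 1) + A (m + 1) * εl (m + 1)) := Finset.sum_range_succ _ _
  have hkey : A (m + 1) * ((η (m + 1) + σ) * ‖yh (m + 1) - P‖ ^ 2)
      ≤ η0 * ‖xsσ - x0‖ ^ 2 + 2 * ∑ i ∈ Finset.range (m + 1 + 1), (2 * εM i + A i * εl i) := by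
    linarith [hq3, hatm, hMxs, hMPf, hPhiub, herr, hTs, hεM (m + 1), hA0e]
  have hLHS : 1 / (η (m + 1) + σ) * ‖(η (m + 1) + σ) • (yh (m + 1) - P)‖ ^ 2
      = (η (m + 1) + σ) * ‖yh (m + 1) - P‖ ^ 2 := by
    rw [norm_smul, Real.norm_eq_abs, abs_of_pos hηρ, mul_pow]
    field_simp
  rw [hLHS, one_div_mul_eq_div, le_div_iff₀ (hApos (m + 1))]
  linarith [hkey]
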